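/- arXiv:2110.02101 — 3 statements merged into one kernel-verified Lean document; each statement's English description precedes it below -/
import Mathlib

section
/- Let G₁ be an edge-regular graph with parameters (n₁, k₁, λ₁) and G₂ an edge-regular graph with parameters (n₂, k₂, λ₂), each containing at least one edge. Then the strong product G₁ ⊠ G₂ is edge-regular with parameters (n₁n₂, k₁+k₂+k₁k₂, λ) for some λ if and only if λ₂ + k₁λ₂ + 2k₁ = λ₁ + k₂λ₁ + 2k₂ = λ₁λ₂ + 2λ₂ + 2λ₁ + 2, in which case λ equals this common value. -/
open SimpleGraph

def SimpleGraph.IsEdgeRegular {V : Type*} [Fintype V] (G : SimpleGraph V) (n k l : ℕ) : Prop :=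
  Fintype.card V = n ∧ (∀ v : V, (G.neighborSet v).ncard = k) ∧
    ∀ u v : V, G.Adj u v → (G.commonNeighbors u v).ncard = l

/-- The strong (normal) product of two simple graphs. -/
def SimpleGraph.strongProd {V₁ V₂ : Type*} (G₁ : SimpleGraph V₁) (G₂ : SimpleGraph V₂) :
    SimpleGraph (V₁ × V₂) where
  Adj x y := (x.1 = y.1 ∧ G₂.Adj x.2 y.2) ∨ (x.2 = y.2 ∧ G₁.Adj x.1 y.1) ∨
    (G₁.Adj x.1 y.1 ∧ G₂.Adj x.2 y.2)
  symm := ⟨fun _ _ h => by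
    rcases h with h | h | h
    · exact Or.inl ⟨h.1.symm, h.2.symm⟩
    · exact Or.inr (Or.inl ⟨h.1.symm, h.2.symm⟩)
    · exact Or.inr (Or.inr ⟨h.1.symm, h.2.symm⟩)⟩
  loopless := ⟨fun x h => by
    rcases h with h | h | h
    · exact G₂.loopless.irrefl _ h.2
    · exact G₁.loopless.irrefl _ h.2
    · exact G₁.loopless.irrefl _ h.1⟩

lemma myncard_prod {α β : Type*} (s : Set α) (t : Set β) :
    (s ×ˢ t).ncard = s.ncard * t.ncard := by
  rw [← Nat.card_coe_set_eq, ← Nat.card_coe_set_eq, ← Nat.card_coe_set_eq,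
    Nat.card_congr (Equiv.Set.prod s t), Nat.card_prod]

lemma closed_inter_adj {V : Type*} (G : SimpleGraph V) {u u' : V} (h : G.Adj u u') :
    insert u (G.neighborSet u) ∩ insert u' (G.neighborSet u') =
      insert u (insert u' (G.commonNeighbors u u')) := by
  have h' := h.symm
  ext a
  simp only [Set.mem_inter_iff, Set.mem_insert_iff, mem_neighborSet, commonNeighbors,
    Set.mem_inter_iff, mem_neighborSet]
  constructor
  · rintro ⟨h1 | h1, h2 | h2⟩ <;> tauto
  · rintro (rfl | rfl | ⟨ha, hb⟩) <;> tauto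

lemma closed_inter_adj_ncard {V : Type*} [Fintype V] (G : SimpleGraph V) {u u' : V} {l : ℕ}
    (h : G.Adj u u') (hl : (G.commonNeighbors u u').ncard = l) :
    (insert u (G.neighborSet u) ∩ insert u' (G.neighborSet u')).ncard = l + 2 := by
  rw [closed_inter_adj G h]
  rw [Set.ncard_insert_of_notMem, Set.ncard_insert_of_notMem, hl]
  · simp [commonNeighbors]
  · simp only [Set.mem_insert_iff, commonNeighbors, Set.mem_inter_iff, mem_neighborSet]
    push_neg
    exact ⟨h.ne, fun hu => absurd hu (G.loopless.irrefl u)⟩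

lemma closed_ncard {V : Type*} [Fintype V] (G : SimpleGraph V) (u : V) {k : ℕ}
    (h : (G.neighborSet u).ncard = k) :
    (insert u (G.neighborSet u)).ncard = k + 1 := by
  rw [Set.ncard_insert_of_notMem (by simp), h]

lemma strong_nbr {V₁ V₂ : Type*} (G₁ : SimpleGraph V₁) (G₂ : SimpleGraph V₂) (x : V₁ × V₂) :
    (G₁.strongProd G₂).neighborSet x =
      (insert x.1 (G₁.neighborSet x.1) ×ˢ insert x.2 (G₂.neighborSet x.2)) \ {x} := by
  obtain ⟨u, v⟩ := x
  ext ⟨a, b⟩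
  simp only [mem_neighborSet, strongProd, Set.mem_diff, Set.mem_prod, Set.mem_insert_iff,
    mem_neighborSet, Set.mem_singleton_iff, Prod.mk.injEq, not_and]
  constructor
  · rintro (⟨h1, h2⟩ | ⟨h1, h2⟩ | ⟨h1, h2⟩)
    · exact ⟨⟨Or.inl h1.symm, Or.inr h2⟩, fun _ hb => G₂.loopless.irrefl v (hb ▸ h2)⟩
    · exact ⟨⟨Or.inr h2, Or.inl h1.symm⟩, fun ha _ => G₁.loopless.irrefl u (ha ▸ h2)⟩
    · exact ⟨⟨Or.inr h1, Or.inr h2⟩, fun ha _ => G₁.loopless.irrefl u (ha ▸ h1)⟩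
  · rintro ⟨⟨h1 | h1, h2 | h2⟩, hne⟩
    · exact absurd h2 (hne h1)
    · exact Or.inl ⟨h1.symm, h2⟩
    · exact Or.inr (Or.inl ⟨h2.symm, h1⟩)
    · exact Or.inr (Or.inr ⟨h1, h2⟩)

lemma strong_common {V₁ V₂ : Type*} (G₁ : SimpleGraph V₁) (G₂ : SimpleGraph V₂) (x y : V₁ × V₂) :
    (G₁.strongProd G₂).commonNeighbors x y =
      ((insert x.1 (G₁.neighborSet x.1) ∩ insert y.1 (G₁.neighborSet y.1)) ×ˢ
        (insert x.2 (G₂.neighborSet x.2) ∩ insert y.2 (G₂.neighborSet y.2))) \ {x, y} := by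
  rw [SimpleGraph.commonNeighbors, strong_nbr, strong_nbr, ← Set.prod_inter_prod]
  ext z
  simp only [Set.mem_inter_iff, Set.mem_diff, Set.mem_singleton_iff, Set.mem_insert_iff]
  tauto

lemma strong_common_ncard {V₁ V₂ : Type*} [Fintype V₁] [Fintype V₂]
    (G₁ : SimpleGraph V₁) (G₂ : SimpleGraph V₂) {x y : V₁ × V₂} {a b : ℕ}
    (hxy : x ≠ y)
    (hx : x ∈ (insert x.1 (G₁.neighborSet x.1) ∩ insert y.1 (G₁.neighborSet y.1)) ×ˢ
        (insert x.2 (G₂.neighborSet x.2) ∩ insert y.2 (G₂.neighborSet y.2)))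
    (hy : y ∈ (insert x.1 (G₁.neighborSet x.1) ∩ insert y.1 (G₁.neighborSet y.1)) ×ˢ
        (insert x.2 (G₂.neighborSet x.2) ∩ insert y.2 (G₂.neighborSet y.2)))
    (ha : (insert x.1 (G₁.neighborSet x.1) ∩ insert y.1 (G₁.neighborSet y.1)).ncard = a)
    (hb : (insert x.2 (G₂.neighborSet x.2) ∩ insert y.2 (G₂.neighborSet y.2)).ncard = b) :
    ((G₁.strongProd G₂).commonNeighbors x y).ncard = a * b - 2 := by
  rw [strong_common, Set.ncard_diff (by rintro z (rfl | rfl) <;> assumption),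
    myncard_prod, ha, hb, Set.ncard_pair hxy]

lemma mem_cp {V₁ V₂ : Type*} (G₁ : SimpleGraph V₁) (G₂ : SimpleGraph V₂) {z x y : V₁ × V₂}
    (ha : z.1 = x.1 ∨ G₁.Adj x.1 z.1) (hb : z.1 = y.1 ∨ G₁.Adj y.1 z.1)
    (hc : z.2 = x.2 ∨ G₂.Adj x.2 z.2) (hd : z.2 = y.2 ∨ G₂.Adj y.2 z.2) :
    z ∈ (insert x.1 (G₁.neighborSet x.1) ∩ insert y.1 (G₁.neighborSet y.1)) ×ˢ
        (insert x.2 (G₂.neighborSet x.2) ∩ insert y.2 (G₂.neighborSet y.2)) := by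
  simp only [Set.mem_prod, Set.mem_inter_iff, Set.mem_insert_iff, SimpleGraph.mem_neighborSet]
  tauto

/-- the strong product of two edge-regular graphs (each with at least one edge) is
edge-regular with parameters `(n₁n₂, k₁ + k₂ + k₁k₂, λ)` for some `λ` iff
`λ₂ + k₁λ₂ + 2k₁ = λ₁ + k₂λ₁ + 2k₂ = λ₁λ₂ + 2λ₂ + 2λ₁ + 2`, in which case `λ` is this
common value. -/
theorem stmt_6 {V₁ V₂ : Type*} [Fintype V₁] [Fintype V₂]
    (G₁ : SimpleGraph V₁) (G₂ : SimpleGraph V₂) (n₁ k₁ l₁ n₂ k₂ l₂ : ℕ)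
    (h₁ : G₁.IsEdgeRegular n₁ k₁ l₁) (h₂ : G₂.IsEdgeRegular n₂ k₂ l₂)
    (he₁ : ∃ a b : V₁, G₁.Adj a b) (he₂ : ∃ a b : V₂, G₂.Adj a b) :
    ((∃ l : ℕ, (G₁.strongProd G₂).IsEdgeRegular (n₁ * n₂) (k₁ + k₂ + k₁ * k₂) l) ↔
        (l₂ + k₁ * l₂ + 2 * k₁ = l₁ + k₂ * l₁ + 2 * k₂ ∧
          l₁ + k₂ * l₁ + 2 * k₂ = l₁ * l₂ + 2 * l₂ + 2 * l₁ + 2)) ∧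
      ((l₂ + k₁ * l₂ + 2 * k₁ = l₁ + k₂ * l₁ + 2 * k₂ ∧
          l₁ + k₂ * l₁ + 2 * k₂ = l₁ * l₂ + 2 * l₂ + 2 * l₁ + 2) →
        (G₁.strongProd G₂).IsEdgeRegular (n₁ * n₂) (k₁ + k₂ + k₁ * k₂)
          (l₂ + k₁ * l₂ + 2 * k₁)) := by
  obtain ⟨hn₁, hk₁, hl₁⟩ := h₁
  obtain ⟨hn₂, hk₂, hl₂⟩ := h₂
  obtain ⟨a, b, hab⟩ := he₁
  obtain ⟨c, d, hcd⟩ := he₂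
  -- degree
  have hdeg : ∀ x : V₁ × V₂, ((G₁.strongProd G₂).neighborSet x).ncard = k₁ + k₂ + k₁ * k₂ := by
    intro x
    rw [strong_nbr, Set.ncard_diff_singleton_of_mem (Set.mem_prod.mpr ⟨Set.mem_insert _ _, Set.mem_insert _ _⟩),
      myncard_prod, closed_ncard G₁ x.1 (hk₁ x.1), closed_ncard G₂ x.2 (hk₂ x.2)]
    have : (k₁ + 1) * (k₂ + 1) = k₁ + k₂ + k₁ * k₂ + 1 := by ring
    omega
  have hA : ∀ x y : V₁ × V₂, x.1 = y.1 → G₂.Adj x.2 y.2 →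
      ((G₁.strongProd G₂).commonNeighbors x y).ncard = l₂ + k₁ * l₂ + 2 * k₁ := by
    intro x y e hq
    have hxy : x ≠ y := by rintro rfl; exact G₂.loopless.irrefl _ hq
    rw [strong_common_ncard G₁ G₂ (a := k₁ + 1) (b := l₂ + 2) hxy
      (mem_cp G₁ G₂ (Or.inl rfl) (Or.inl e) (Or.inl rfl) (Or.inr hq.symm))
      (mem_cp G₁ G₂ (Or.inl e.symm) (Or.inl rfl) (Or.inr hq) (Or.inl rfl))
      (by rw [e, Set.inter_self]; exact closed_ncard G₁ y.1 (hk₁ y.1))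
      (closed_inter_adj_ncard G₂ hq (hl₂ _ _ hq))]
    have : (k₁ + 1) * (l₂ + 2) = l₂ + k₁ * l₂ + 2 * k₁ + 2 := by ring
    omega
  have hB : ∀ x y : V₁ × V₂, x.2 = y.2 → G₁.Adj x.1 y.1 →
      ((G₁.strongProd G₂).commonNeighbors x y).ncard = l₁ + k₂ * l₁ + 2 * k₂ := by
    intro x y e hq
    have hxy : x ≠ y := by rintro rfl; exact G₁.loopless.irrefl _ hq
    rw [strong_common_ncard G₁ G₂ (a := l₁ + 2) (b := k₂ + 1) hxy
      (mem_cp G₁ G₂ (Or.inl rfl) (Or.inr hq.symm) (Or.inl rfl) (Or.inl e))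
      (mem_cp G₁ G₂ (Or.inr hq) (Or.inl rfl) (Or.inl e.symm) (Or.inl rfl))
      (closed_inter_adj_ncard G₁ hq (hl₁ _ _ hq))
      (by rw [e, Set.inter_self]; exact closed_ncard G₂ y.2 (hk₂ y.2))]
    have : (l₁ + 2) * (k₂ + 1) = l₁ + k₂ * l₁ + 2 * k₂ + 2 := by ring
    omega
  have hC : ∀ x y : V₁ × V₂, G₁.Adj x.1 y.1 → G₂.Adj x.2 y.2 →
      ((G₁.strongProd G₂).commonNeighbors x y).ncard = l₁ * l₂ + 2 * l₂ + 2 * l₁ + 2 := by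
    intro x y hq1 hq2
    have hxy : x ≠ y := by rintro rfl; exact G₁.loopless.irrefl _ hq1
    rw [strong_common_ncard G₁ G₂ (a := l₁ + 2) (b := l₂ + 2) hxy
      (mem_cp G₁ G₂ (Or.inl rfl) (Or.inr hq1.symm) (Or.inl rfl) (Or.inr hq2.symm))
      (mem_cp G₁ G₂ (Or.inr hq1) (Or.inl rfl) (Or.inr hq2) (Or.inl rfl))
      (closed_inter_adj_ncard G₁ hq1 (hl₁ _ _ hq1))
      (closed_inter_adj_ncard G₂ hq2 (hl₂ _ _ hq2))]
    have : (l₁ + 2) * (l₂ + 2) = l₁ * l₂ + 2 * l₂ + 2 * l₁ + 2 + 2 := by ring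
    omega
  have main : (l₂ + k₁ * l₂ + 2 * k₁ = l₁ + k₂ * l₁ + 2 * k₂ ∧
      l₁ + k₂ * l₁ + 2 * k₂ = l₁ * l₂ + 2 * l₂ + 2 * l₁ + 2) →
      (G₁.strongProd G₂).IsEdgeRegular (n₁ * n₂) (k₁ + k₂ + k₁ * k₂)
        (l₂ + k₁ * l₂ + 2 * k₁) := by
    rintro ⟨q1, q2⟩
    refine ⟨by rw [Fintype.card_prod, hn₁, hn₂], hdeg, ?_⟩
    intro x y hxy
    rcases hxy with ⟨e, hq⟩ | ⟨e, hq⟩ | ⟨hq1, hq2⟩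
    · exact hA x y e hq
    · rw [hB x y e hq]; omega
    · rw [hC x y hq1 hq2]; omega
  refine ⟨⟨?_, fun h => ⟨_, main h⟩⟩, main⟩
  rintro ⟨l, _, _, hcom⟩
  have e1 := hcom (a, c) (a, d) (Or.inl ⟨rfl, hcd⟩)
  have e2 := hcom (a, c) (b, c) (Or.inr (Or.inl ⟨rfl, hab⟩))
  have e3 := hcom (a, c) (b, d) (Or.inr (Or.inr ⟨hab, hcd⟩))
  rw [hA (a, c) (a, d) rfl hcd] at e1
  rw [hB (a, c) (b, c) rfl hab] at e2
  rw [hC (a, c) (b, d) hab hcd] at e3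
  omega
end

section
/- Let G be a pseudo strongly regular graph containing two non-incident (vertex-disjoint) edges. Then the line graph L(G) is pseudo strongly regular with parameter μ = 1 if and only if every two distinct vertices of G have at most one common neighbour (i.e., G is (diamond, K₄, C₄)-free) and every two non-incident edges of G lie on a common path on 4 vertices (i.e., for every two non-incident edges e₁, e₂ of G there is an edge of G joining an endpoint of e₁ to an endpoint of e₂). -/
set_option linter.unusedSectionVars false


open SimpleGraph

def SimpleGraph.IsPseudoSRG {V : Type*} [Fintype V] (G : SimpleGraph V) (n k m : ℕ) : Prop :=
  Fintype.card V = n ∧ (∀ v : V, (G.neighborSet v).ncard = k) ∧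
    ∀ u v : V, u ≠ v → ¬G.Adj u v → (G.commonNeighbors u v).ncard = m

section Aux

variable {V : Type*} [Fintype V] [DecidableEq V] {G : SimpleGraph V} [DecidableRel G.Adj]

private lemma sym2_ne {x y z w : V} (h1 : x = z → y ≠ w) (h2 : x = w → y ≠ z) :
    s(x, y) ≠ s(z, w) := by
  rw [Ne, Sym2.eq_iff]
  rintro (⟨rfl, rfl⟩ | ⟨rfl, rfl⟩)
  exacts [h1 rfl rfl, h2 rfl rfl]

private lemma mk_ne {s t : Sym2 V} {hs : s ∈ G.edgeSet} {ht : t ∈ G.edgeSet} (h : s ≠ t) :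
    (⟨s, hs⟩ : G.edgeSet) ≠ ⟨t, ht⟩ := fun h' => h (congrArg Subtype.val h')

private lemma edge_rep (e : G.edgeSet) :
    ∃ a b, ∃ h : G.Adj a b, e = ⟨s(a, b), G.mem_edgeSet.mpr h⟩ := by
  obtain ⟨s, hs⟩ := e
  revert hs
  induction s using Sym2.ind with
  | _ a b => exact fun hs => ⟨a, b, G.mem_edgeSet.mp hs, rfl⟩

private lemma line_adj_mk {x y z w : V} (hxy : G.Adj x y) (hzw : G.Adj z w)
    (hne : s(x, y) ≠ s(z, w)) (hv : x = z ∨ x = w ∨ y = z ∨ y = w) :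
    G.lineGraph.Adj ⟨s(x, y), G.mem_edgeSet.mpr hxy⟩ ⟨s(z, w), G.mem_edgeSet.mpr hzw⟩ := by
  refine lineGraph_adj_iff_exists.mpr ⟨fun h => hne (congrArg Subtype.val h), ?_⟩
  rcases hv with rfl | rfl | rfl | rfl
  · exact ⟨x, Sym2.mem_iff.mpr (Or.inl rfl), Sym2.mem_iff.mpr (Or.inl rfl)⟩
  · exact ⟨x, Sym2.mem_iff.mpr (Or.inl rfl), Sym2.mem_iff.mpr (Or.inr rfl)⟩
  · exact ⟨y, Sym2.mem_iff.mpr (Or.inr rfl), Sym2.mem_iff.mpr (Or.inl rfl)⟩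
  · exact ⟨y, Sym2.mem_iff.mpr (Or.inr rfl), Sym2.mem_iff.mpr (Or.inr rfl)⟩

/-- Two distinct common neighbours of two distinct vertices contradict the `≤ 1` hypothesis. -/
private lemma two_common (H1 : ∀ u v : V, u ≠ v → (G.commonNeighbors u v).ncard ≤ 1)
    {u v w₁ w₂ : V} (huv : u ≠ v) (hw : w₁ ≠ w₂)
    (h1 : G.Adj u w₁) (h2 : G.Adj v w₁) (h3 : G.Adj u w₂) (h4 : G.Adj v w₂) : False := by
  have hsub : ({w₁, w₂} : Set V) ⊆ G.commonNeighbors u v := by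
    intro x hx
    simp only [Set.mem_insert_iff, Set.mem_singleton_iff] at hx
    rcases hx with rfl | rfl
    · exact G.mem_commonNeighbors.mpr ⟨h1, h2⟩
    · exact G.mem_commonNeighbors.mpr ⟨h3, h4⟩
  have hle := Set.ncard_le_ncard hsub (Set.toFinite _)
  rw [Set.ncard_pair hw] at hle
  have := H1 u v huv
  omega

/-- A triangle `a c d` with a pendant edge `a b` is impossible. -/
private lemma tri_pendant {k : ℕ} (hk : ∀ v : V, (G.neighborSet v).ncard = k)
    (H1 : ∀ u v : V, u ≠ v → (G.commonNeighbors u v).ncard ≤ 1)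
    (H2 : ∀ a b c d : V, G.Adj a b → G.Adj c d → a ≠ c → a ≠ d → b ≠ c → b ≠ d →
      (G.Adj a c ∨ G.Adj a d ∨ G.Adj b c ∨ G.Adj b d))
    {a b c d : V} (hab : G.Adj a b) (hac : G.Adj a c) (had : G.Adj a d) (hcd : G.Adj c d)
    (hbc : b ≠ c) (hbd : b ≠ d) : False := by
  have hnbc : ¬G.Adj b c := fun h => two_common H1 hac.ne hbd hab h.symm had hcd
  have hnbd : ¬G.Adj b d := fun h => two_common H1 had.ne hbc hab h.symm hac hcd.symm
  have h3 : ({b, c, d} : Set V) ⊆ G.neighborSet a := by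
    intro x hx
    simp only [Set.mem_insert_iff, Set.mem_singleton_iff] at hx
    rcases hx with rfl | rfl | rfl
    · exact hab
    · exact hac
    · exact had
  have hk3 : 3 ≤ k := by
    have hle := Set.ncard_le_ncard h3 (Set.toFinite _)
    rw [hk a] at hle
    have hcard : ({b, c, d} : Set V).ncard = 3 := by
      rw [Set.ncard_insert_of_notMem (by simp [hbc, hbd]) (Set.toFinite _), Set.ncard_pair hcd.ne]
    omega
  have hx : ∃ x ∈ G.neighborSet b, x ≠ a := by
    by_contra h
    push_neg at h
    have hsub : G.neighborSet b ⊆ {a} := fun x hx => h x hx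
    have hle := Set.ncard_le_ncard hsub (Set.toFinite _)
    rw [hk b, Set.ncard_singleton] at hle
    omega
  obtain ⟨x, hbx, hxa⟩ := hx
  rw [G.mem_neighborSet] at hbx
  have hxc : x ≠ c := fun h => hnbc (h ▸ hbx)
  have hxd : x ≠ d := fun h => hnbd (h ▸ hbx)
  rcases H2 b x c d hbx hcd hbc hbd hxc hxd with h | h | h | h
  · exact hnbc h
  · exact hnbd h
  · exact two_common H1 (Ne.symm hxa) hbc hab hbx.symm hac h
  · exact two_common H1 (Ne.symm hxa) hbd hab hbx.symm had h

/-- Uniqueness of the cross edge between two disjoint edges. -/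
private lemma cross_unique {k : ℕ} (hk : ∀ v : V, (G.neighborSet v).ncard = k)
    (H1 : ∀ u v : V, u ≠ v → (G.commonNeighbors u v).ncard ≤ 1)
    (H2 : ∀ a b c d : V, G.Adj a b → G.Adj c d → a ≠ c → a ≠ d → b ≠ c → b ≠ d →
      (G.Adj a c ∨ G.Adj a d ∨ G.Adj b c ∨ G.Adj b d))
    {a b c d : V} (hab : G.Adj a b) (hcd : G.Adj c d)
    (hac : a ≠ c) (had : a ≠ d) (hbc : b ≠ c) (hbd : b ≠ d)
    {x y x' y' : V} (hx : x = a ∨ x = b) (hy : y = c ∨ y = d)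
    (hx' : x' = a ∨ x' = b) (hy' : y' = c ∨ y' = d)
    (hxy : G.Adj x y) (hxy' : G.Adj x' y') : x = x' ∧ y = y' := by
  rcases hx with rfl | rfl <;> rcases hy with rfl | rfl <;>
    rcases hx' with rfl | rfl <;> rcases hy' with rfl | rfl
  · exact ⟨rfl, rfl⟩
  · exact (tri_pendant hk H1 H2 hab hxy hxy' hcd hbc hbd).elim
  · exact (tri_pendant hk H1 H2 hcd hxy.symm hxy'.symm hab had.symm hbd.symm).elim
  · exact (two_common H1 had hbc hab hxy'.symm hxy hcd.symm).elim
  · exact (tri_pendant hk H1 H2 hab hxy' hxy hcd hbc hbd).elim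
  · exact ⟨rfl, rfl⟩
  · exact (two_common H1 hac hbd hab hxy'.symm hxy hcd).elim
  · exact (tri_pendant hk H1 H2 hcd.symm hxy.symm hxy'.symm hab hac.symm hbc.symm).elim
  · exact (tri_pendant hk H1 H2 hcd hxy'.symm hxy.symm hab had.symm hbd.symm).elim
  · exact (two_common H1 hac hbd hab hxy.symm hxy' hcd).elim
  · exact ⟨rfl, rfl⟩
  · exact (tri_pendant hk H1 H2 hab.symm hxy hxy' hcd hac had).elim
  · exact (two_common H1 had hbc hab hxy.symm hxy' hcd.symm).elim
  · exact (tri_pendant hk H1 H2 hcd.symm hxy'.symm hxy.symm hab hac.symm hbc.symm).elim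
  · exact (tri_pendant hk H1 H2 hab.symm hxy' hxy hcd hac had).elim
  · exact ⟨rfl, rfl⟩

/-- A common neighbour (in the line graph) of two disjoint edges is a cross edge. -/
private lemma cross_of_common {a b c d : V} (hab : G.Adj a b) (hcd : G.Adj c d)
    (hac : a ≠ c) (had : a ≠ d) (hbc : b ≠ c) (hbd : b ≠ d) {f : G.edgeSet}
    (h1 : G.lineGraph.Adj ⟨s(a, b), G.mem_edgeSet.mpr hab⟩ f)
    (h2 : G.lineGraph.Adj ⟨s(c, d), G.mem_edgeSet.mpr hcd⟩ f) :
    ∃ x y, (x = a ∨ x = b) ∧ (y = c ∨ y = d) ∧ G.Adj x y ∧ (f : Sym2 V) = s(x, y) := by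
  obtain ⟨-, x, hx1, hx2⟩ := lineGraph_adj_iff_exists.mp h1
  obtain ⟨-, y, hy1, hy2⟩ := lineGraph_adj_iff_exists.mp h2
  have hxab : x = a ∨ x = b := Sym2.mem_iff.mp hx1
  have hycd : y = c ∨ y = d := Sym2.mem_iff.mp hy1
  have hxy : x ≠ y := by
    rcases hxab with rfl | rfl <;> rcases hycd with rfl | rfl <;> assumption
  have hf : (f : Sym2 V) = s(x, y) := (Sym2.mem_and_mem_iff hxy).mp ⟨hx2, hy2⟩
  refine ⟨x, y, hxab, hycd, ?_, hf⟩
  have hp := f.prop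
  rw [hf] at hp
  exact G.mem_edgeSet.mp hp

/-- The number of edges through `a` other than `ab` is `k - 1`. -/
private lemma count_through {k : ℕ} (hk : ∀ v : V, (G.neighborSet v).ncard = k)
    {a b : V} (hab : G.Adj a b) :
    {f : G.edgeSet | a ∈ (f : Sym2 V) ∧ f ≠ ⟨s(a, b), G.mem_edgeSet.mpr hab⟩}.ncard = k - 1 := by
  have himg : {f : G.edgeSet | a ∈ (f : Sym2 V) ∧ f ≠ ⟨s(a, b), G.mem_edgeSet.mpr hab⟩} =
      (fun x => if h : G.Adj a x then (⟨s(a, x), G.mem_edgeSet.mpr h⟩ : G.edgeSet)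
        else ⟨s(a, b), G.mem_edgeSet.mpr hab⟩) '' (G.neighborSet a \ {b}) := by
    ext f
    constructor
    · rintro ⟨haf, hfe⟩
      obtain ⟨x, y, hxy, rfl⟩ := edge_rep f
      have haf' : a = x ∨ a = y := Sym2.mem_iff.mp haf
      rcases haf' with rfl | rfl
      · refine ⟨y, ⟨hxy, ?_⟩, ?_⟩
        · intro h
          rw [Set.mem_singleton_iff] at h
          subst h
          exact hfe rfl
        · simp only [dif_pos hxy]
      · refine ⟨x, ⟨hxy.symm, ?_⟩, ?_⟩
        · intro h
          rw [Set.mem_singleton_iff] at h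
          subst h
          exact hfe (Subtype.ext Sym2.eq_swap)
        · simp only [dif_pos hxy.symm]
          exact Subtype.ext Sym2.eq_swap
    · rintro ⟨x, ⟨hax, hxb⟩, rfl⟩
      have hax' : G.Adj a x := hax
      simp only [Set.mem_setOf_eq, dif_pos hax']
      refine ⟨Sym2.mem_iff.mpr (Or.inl rfl), ?_⟩
      intro h
      have hval : s(a, x) = s(a, b) := congrArg Subtype.val h
      rw [Sym2.eq_iff] at hval
      rcases hval with ⟨-, rfl⟩ | ⟨h1, -⟩
      · exact hxb rfl
      · exact hab.ne h1
  have hinj : Set.InjOn (fun x => if h : G.Adj a x then (⟨s(a, x), G.mem_edgeSet.mpr h⟩ : G.edgeSet)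
      else ⟨s(a, b), G.mem_edgeSet.mpr hab⟩) (G.neighborSet a \ {b}) := by
    intro x₁ hx₁ x₂ hx₂ heq
    have h₁ : G.Adj a x₁ := hx₁.1
    have h₂ : G.Adj a x₂ := hx₂.1
    simp only [dif_pos h₁, dif_pos h₂] at heq
    have hval : s(a, x₁) = s(a, x₂) := congrArg Subtype.val heq
    rw [Sym2.eq_iff] at hval
    rcases hval with ⟨-, h⟩ | ⟨h, -⟩
    · exact h
    · exact absurd h h₂.ne
  rw [himg, Set.ncard_image_of_injOn hinj,
    Set.ncard_diff_singleton_of_mem ((G.mem_neighborSet a b).mpr hab), hk a]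

/-- The line graph of a `k`-regular graph is `(2k-2)`-regular. -/
private lemma line_degree {k : ℕ} (hk : ∀ v : V, (G.neighborSet v).ncard = k) (e : G.edgeSet) :
    (G.lineGraph.neighborSet e).ncard = (k - 1) + (k - 1) := by
  obtain ⟨a, b, hab, rfl⟩ := edge_rep e
  have hset : G.lineGraph.neighborSet ⟨s(a, b), G.mem_edgeSet.mpr hab⟩ =
      {f : G.edgeSet | a ∈ (f : Sym2 V) ∧ f ≠ ⟨s(a, b), G.mem_edgeSet.mpr hab⟩} ∪
      {f : G.edgeSet | b ∈ (f : Sym2 V) ∧ f ≠ ⟨s(a, b), G.mem_edgeSet.mpr hab⟩} := by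
    ext f
    rw [mem_neighborSet, lineGraph_adj_iff_exists]
    constructor
    · rintro ⟨hne, v, hv1, hv2⟩
      rcases Sym2.mem_iff.mp hv1 with rfl | rfl
      · exact Or.inl ⟨hv2, Ne.symm hne⟩
      · exact Or.inr ⟨hv2, Ne.symm hne⟩
    · rintro (⟨h1, h2⟩ | ⟨h1, h2⟩)
      · exact ⟨Ne.symm h2, a, Sym2.mem_iff.mpr (Or.inl rfl), h1⟩
      · exact ⟨Ne.symm h2, b, Sym2.mem_iff.mpr (Or.inr rfl), h1⟩
  have hdisj : Disjoint
      {f : G.edgeSet | a ∈ (f : Sym2 V) ∧ f ≠ ⟨s(a, b), G.mem_edgeSet.mpr hab⟩}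
      {f : G.edgeSet | b ∈ (f : Sym2 V) ∧ f ≠ ⟨s(a, b), G.mem_edgeSet.mpr hab⟩} := by
    rw [Set.disjoint_left]
    rintro f ⟨ha, hfe⟩ ⟨hb, -⟩
    exact hfe (Subtype.ext ((Sym2.mem_and_mem_iff hab.ne).mp ⟨ha, hb⟩))
  rw [hset, Set.ncard_union_eq hdisj (Set.toFinite _) (Set.toFinite _), count_through hk hab]
  have hba : (⟨s(b, a), G.mem_edgeSet.mpr hab.symm⟩ : G.edgeSet)
      = ⟨s(a, b), G.mem_edgeSet.mpr hab⟩ := Subtype.ext Sym2.eq_swap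
  have h2 := count_through hk hab.symm
  rw [hba] at h2
  rw [h2]

/-- Exactly one common neighbour for disjoint edges, given both conditions. -/
private lemma common_one {k : ℕ} (hk : ∀ v : V, (G.neighborSet v).ncard = k)
    (H1 : ∀ u v : V, u ≠ v → (G.commonNeighbors u v).ncard ≤ 1)
    (H2 : ∀ a b c d : V, G.Adj a b → G.Adj c d → a ≠ c → a ≠ d → b ≠ c → b ≠ d →
      (G.Adj a c ∨ G.Adj a d ∨ G.Adj b c ∨ G.Adj b d))
    {a b c d : V} (hab : G.Adj a b) (hcd : G.Adj c d)
    (hac : a ≠ c) (had : a ≠ d) (hbc : b ≠ c) (hbd : b ≠ d) :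
    (G.lineGraph.commonNeighbors ⟨s(a, b), G.mem_edgeSet.mpr hab⟩
      ⟨s(c, d), G.mem_edgeSet.mpr hcd⟩).ncard = 1 := by
  obtain ⟨x₀, y₀, hx₀, hy₀, h₀⟩ : ∃ x y, (x = a ∨ x = b) ∧ (y = c ∨ y = d) ∧ G.Adj x y := by
    rcases H2 a b c d hab hcd hac had hbc hbd with h | h | h | h
    · exact ⟨a, c, Or.inl rfl, Or.inl rfl, h⟩
    · exact ⟨a, d, Or.inl rfl, Or.inr rfl, h⟩
    · exact ⟨b, c, Or.inr rfl, Or.inl rfl, h⟩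
    · exact ⟨b, d, Or.inr rfl, Or.inr rfl, h⟩
  have hyab : y₀ ≠ a ∧ y₀ ≠ b := by
    rcases hy₀ with rfl | rfl
    · exact ⟨Ne.symm hac, Ne.symm hbc⟩
    · exact ⟨Ne.symm had, Ne.symm hbd⟩
  have hxcd : x₀ ≠ c ∧ x₀ ≠ d := by
    rcases hx₀ with rfl | rfl
    · exact ⟨hac, had⟩
    · exact ⟨hbc, hbd⟩
  have hne1 : s(a, b) ≠ s(x₀, y₀) := by
    intro h
    have hm : y₀ ∈ s(a, b) := by rw [h]; exact Sym2.mem_iff.mpr (Or.inr rfl)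
    rcases Sym2.mem_iff.mp hm with h' | h'
    · exact hyab.1 h'
    · exact hyab.2 h'
  have hne2 : s(c, d) ≠ s(x₀, y₀) := by
    intro h
    have hm : x₀ ∈ s(c, d) := by rw [h]; exact Sym2.mem_iff.mpr (Or.inl rfl)
    rcases Sym2.mem_iff.mp hm with h' | h'
    · exact hxcd.1 h'
    · exact hxcd.2 h'
  have hmem1 : G.lineGraph.Adj ⟨s(a, b), G.mem_edgeSet.mpr hab⟩
      ⟨s(x₀, y₀), G.mem_edgeSet.mpr h₀⟩ := by
    refine line_adj_mk hab h₀ hne1 ?_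
    rcases hx₀ with rfl | rfl
    · exact Or.inl rfl
    · exact Or.inr (Or.inr (Or.inl rfl))
  have hmem2 : G.lineGraph.Adj ⟨s(c, d), G.mem_edgeSet.mpr hcd⟩
      ⟨s(x₀, y₀), G.mem_edgeSet.mpr h₀⟩ := by
    refine line_adj_mk hcd h₀ hne2 ?_
    rcases hy₀ with rfl | rfl
    · exact Or.inr (Or.inl rfl)
    · exact Or.inr (Or.inr (Or.inr rfl))
  rw [Set.ncard_eq_one]
  refine ⟨⟨s(x₀, y₀), G.mem_edgeSet.mpr h₀⟩, ?_⟩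
  ext f
  rw [Set.mem_singleton_iff, mem_commonNeighbors]
  constructor
  · rintro ⟨h1, h2⟩
    obtain ⟨x, y, hx, hy, hxy, hfval⟩ := cross_of_common hab hcd hac had hbc hbd h1 h2
    obtain ⟨hxx, hyy⟩ := cross_unique hk H1 H2 hab hcd hac had hbc hbd hx hy hx₀ hy₀ hxy h₀
    exact Subtype.ext (by rw [hfval, hxx, hyy])
  · rintro rfl
    exact ⟨hmem1, hmem2⟩

end Aux

/-- for a pseudo strongly regular graph `G` with two non-incident edges, `L(G)` is
pseudo strongly regular with parameter `μ = 1` iff `G` is (diamond, K₄, C₄)-free (any two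
distinct vertices have at most one common neighbour) and every two non-incident edges of `G` lie
on a common path on 4 vertices. -/
theorem stmt_14 {V : Type*} [Fintype V] [DecidableEq V] (G : SimpleGraph V) [DecidableRel G.Adj]
    (n k μ : ℕ) (hG : G.IsPseudoSRG n k μ)
    (hne : ∃ a b c d : V, G.Adj a b ∧ G.Adj c d ∧ a ≠ c ∧ a ≠ d ∧ b ≠ c ∧ b ≠ d) :
    (∃ m d : ℕ, G.lineGraph.IsPseudoSRG m d 1) ↔
      ((∀ u v : V, u ≠ v → (G.commonNeighbors u v).ncard ≤ 1) ∧
        ∀ a b c d : V, G.Adj a b → G.Adj c d → a ≠ c → a ≠ d → b ≠ c → b ≠ d →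
          (G.Adj a c ∨ G.Adj a d ∨ G.Adj b c ∨ G.Adj b d)) := by
  obtain ⟨hn, hk, hmu⟩ := hG
  constructor
  · rintro ⟨m, d, hm, hreg, hcom⟩
    constructor
    · -- at most one common neighbour
      intro u v huv
      by_contra hgt
      push_neg at hgt
      obtain ⟨w₁, w₂, hw₁, hw₂, hw⟩ := (Set.one_lt_ncard_iff (Set.toFinite _)).mp hgt
      rw [mem_commonNeighbors] at hw₁ hw₂
      obtain ⟨huw₁, hvw₁⟩ := hw₁
      obtain ⟨huw₂, hvw₂⟩ := hw₂
      have h1 : u ≠ w₁ := huw₁.ne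
      have h2 : u ≠ w₂ := huw₂.ne
      have h3 : v ≠ w₁ := hvw₁.ne
      have h4 : v ≠ w₂ := hvw₂.ne
      have hE : (⟨s(u, w₁), G.mem_edgeSet.mpr huw₁⟩ : G.edgeSet)
          ≠ ⟨s(v, w₂), G.mem_edgeSet.mpr hvw₂⟩ :=
        mk_ne (sym2_ne (fun h => absurd h huv) (fun h => absurd h h2))
      have hnadj : ¬G.lineGraph.Adj ⟨s(u, w₁), G.mem_edgeSet.mpr huw₁⟩
          ⟨s(v, w₂), G.mem_edgeSet.mpr hvw₂⟩ := by
        intro h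
        obtain ⟨-, z, hz1, hz2⟩ := lineGraph_adj_iff_exists.mp h
        rcases Sym2.mem_iff.mp hz1 with rfl | rfl <;> rcases Sym2.mem_iff.mp hz2 with h' | h'
        · exact huv h'
        · exact h2 h'
        · exact h3 h'.symm
        · exact hw h'
      have hone := hcom _ _ hE hnadj
      have hG₁ : G.lineGraph.Adj ⟨s(u, w₁), G.mem_edgeSet.mpr huw₁⟩
          ⟨s(u, w₂), G.mem_edgeSet.mpr huw₂⟩ :=
        line_adj_mk huw₁ huw₂ (sym2_ne (fun _ => hw) (fun h => absurd h h2)) (Or.inl rfl)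
      have hG₂ : G.lineGraph.Adj ⟨s(v, w₂), G.mem_edgeSet.mpr hvw₂⟩
          ⟨s(u, w₂), G.mem_edgeSet.mpr huw₂⟩ :=
        line_adj_mk hvw₂ huw₂ (sym2_ne (fun h => absurd h.symm huv) (fun h => absurd h h4))
          (Or.inr (Or.inr (Or.inr rfl)))
      have hG₃ : G.lineGraph.Adj ⟨s(u, w₁), G.mem_edgeSet.mpr huw₁⟩
          ⟨s(w₁, v), G.mem_edgeSet.mpr hvw₁.symm⟩ :=
        line_adj_mk huw₁ hvw₁.symm (sym2_ne (fun h => absurd h h1) (fun h => absurd h huv))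
          (Or.inr (Or.inr (Or.inl rfl)))
      have hG₄ : G.lineGraph.Adj ⟨s(v, w₂), G.mem_edgeSet.mpr hvw₂⟩
          ⟨s(w₁, v), G.mem_edgeSet.mpr hvw₁.symm⟩ :=
        line_adj_mk hvw₂ hvw₁.symm (sym2_ne (fun h => absurd h h3) (fun _ => Ne.symm hw))
          (Or.inr (Or.inl rfl))
      have hgne : (⟨s(u, w₂), G.mem_edgeSet.mpr huw₂⟩ : G.edgeSet)
          ≠ ⟨s(w₁, v), G.mem_edgeSet.mpr hvw₁.symm⟩ :=
        mk_ne (sym2_ne (fun h => absurd h h1) (fun h => absurd h huv))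
      have hlt : 1 < (G.lineGraph.commonNeighbors ⟨s(u, w₁), G.mem_edgeSet.mpr huw₁⟩
          ⟨s(v, w₂), G.mem_edgeSet.mpr hvw₂⟩).ncard :=
        (Set.one_lt_ncard_iff (Set.toFinite _)).mpr
          ⟨_, _, (mem_commonNeighbors _).mpr ⟨hG₁, hG₂⟩,
            (mem_commonNeighbors _).mpr ⟨hG₃, hG₄⟩, hgne⟩
      omega
    · -- every two disjoint edges are joined
      intro a b c d hab hcd hac had hbc hbd
      have hE : (⟨s(a, b), G.mem_edgeSet.mpr hab⟩ : G.edgeSet)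
          ≠ ⟨s(c, d), G.mem_edgeSet.mpr hcd⟩ :=
        mk_ne (sym2_ne (fun h => absurd h hac) (fun h => absurd h had))
      have hnadj : ¬G.lineGraph.Adj ⟨s(a, b), G.mem_edgeSet.mpr hab⟩
          ⟨s(c, d), G.mem_edgeSet.mpr hcd⟩ := by
        intro h
        obtain ⟨-, z, hz1, hz2⟩ := lineGraph_adj_iff_exists.mp h
        rcases Sym2.mem_iff.mp hz1 with rfl | rfl <;> rcases Sym2.mem_iff.mp hz2 with h' | h'
        · exact hac h'
        · exact had h'
        · exact hbc h'
        · exact hbd h'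
      have hone := hcom _ _ hE hnadj
      obtain ⟨f, hf⟩ := Set.ncard_eq_one.mp hone
      have hfmem : f ∈ G.lineGraph.commonNeighbors ⟨s(a, b), G.mem_edgeSet.mpr hab⟩
          ⟨s(c, d), G.mem_edgeSet.mpr hcd⟩ := by
        rw [hf]; exact Set.mem_singleton f
      rw [mem_commonNeighbors] at hfmem
      obtain ⟨x, y, hx, hy, hxy, -⟩ :=
        cross_of_common hab hcd hac had hbc hbd hfmem.1 hfmem.2
      rcases hx with rfl | rfl <;> rcases hy with rfl | rfl
      · exact Or.inl hxy
      · exact Or.inr (Or.inl hxy)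
      · exact Or.inr (Or.inr (Or.inl hxy))
      · exact Or.inr (Or.inr (Or.inr hxy))
  · rintro ⟨H1, H2⟩
    refine ⟨Fintype.card G.edgeSet, (k - 1) + (k - 1), rfl, line_degree hk, ?_⟩
    intro e₁ e₂ hne' hnadj
    obtain ⟨a, b, hab, rfl⟩ := edge_rep e₁
    obtain ⟨c, d, hcd, rfl⟩ := edge_rep e₂
    have hnov : ∀ z : V, z ∈ s(a, b) → z ∈ s(c, d) → False := fun z hz1 hz2 =>
      hnadj (lineGraph_adj_iff_exists.mpr ⟨hne', z, hz1, hz2⟩)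
    have hac : a ≠ c := fun h =>
      hnov a (Sym2.mem_iff.mpr (Or.inl rfl)) (Sym2.mem_iff.mpr (Or.inl h))
    have had : a ≠ d := fun h =>
      hnov a (Sym2.mem_iff.mpr (Or.inl rfl)) (Sym2.mem_iff.mpr (Or.inr h))
    have hbc : b ≠ c := fun h =>
      hnov b (Sym2.mem_iff.mpr (Or.inr rfl)) (Sym2.mem_iff.mpr (Or.inl h))
    have hbd : b ≠ d := fun h =>
      hnov b (Sym2.mem_iff.mpr (Or.inr rfl)) (Sym2.mem_iff.mpr (Or.inr h))
    exact common_one hk H1 H2 hab hcd hac had hbc hbd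
end

section
/- Let G be a finite simple graph containing at least one edge. Then the subdivision graph S(G) is not pseudo strongly regular (for any parameters). -/
open SimpleGraph

/-- The subdivision graph of a simple graph: one new vertex in the middle of each edge. -/
def SimpleGraph.subdivision {V : Type*} (G : SimpleGraph V) :
    SimpleGraph (V ⊕ G.edgeSet) where
  Adj x y := match x, y with
    | Sum.inl v, Sum.inr e => v ∈ (e : Sym2 V)
    | Sum.inr e, Sum.inl v => v ∈ (e : Sym2 V)
    | _, _ => False
  symm := by constructor; rintro (v | e) (w | f) h <;> simp_all
  loopless := by constructor; rintro (v | e) h <;> simp_all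

lemma subd_adj_lr {V : Type*} (G : SimpleGraph V) (v : V) (e : G.edgeSet) :
    G.subdivision.Adj (Sum.inl v) (Sum.inr e) ↔ v ∈ (e : Sym2 V) := Iff.rfl

lemma subd_adj_rl {V : Type*} (G : SimpleGraph V) (v : V) (e : G.edgeSet) :
    G.subdivision.Adj (Sum.inr e) (Sum.inl v) ↔ v ∈ (e : Sym2 V) := Iff.rfl

lemma subd_adj_ll {V : Type*} (G : SimpleGraph V) (v w : V) :
    ¬ G.subdivision.Adj (Sum.inl v) (Sum.inl w) := fun h => h

lemma subd_adj_rr {V : Type*} (G : SimpleGraph V) (e f : G.edgeSet) :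
    ¬ G.subdivision.Adj (Sum.inr e) (Sum.inr f) := fun h => h

/-- for a graph `G` with at least one edge, the subdivision graph `S(G)` is not
pseudo strongly regular for any parameters. -/
theorem stmt_17 {V : Type*} [Fintype V] [DecidableEq V] (G : SimpleGraph V) [DecidableRel G.Adj]
    (he : ∃ a b : V, G.Adj a b) :
    ∀ n k m : ℕ, ¬G.subdivision.IsPseudoSRG n k m := by
  obtain ⟨a, b, hab⟩ := he
  have hne : a ≠ b := G.ne_of_adj hab
  set e₀ : G.edgeSet := ⟨s(a, b), hab⟩ with he₀
  rintro n k m ⟨-, hk, hm⟩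
  -- common neighbors of inl a and inl b is {inr e₀}, so m = 1
  have hm1 : m = 1 := by
    have h := hm (Sum.inl a) (Sum.inl b) (by simp [hne]) (subd_adj_ll G a b)
    rw [← h]
    have : G.subdivision.commonNeighbors (Sum.inl a) (Sum.inl b) = {Sum.inr e₀} := by
      ext x
      rcases x with w | f
      · simp only [Set.mem_singleton_iff, commonNeighbors, Set.mem_inter_iff,
          mem_neighborSet]
        constructor
        · rintro ⟨h1, -⟩; exact absurd h1 (subd_adj_ll G a w)
        · rintro h; exact absurd h (by simp)
      · simp only [Set.mem_singleton_iff, commonNeighbors, Set.mem_inter_iff,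
          mem_neighborSet, subd_adj_lr]
        constructor
        · rintro ⟨h1, h2⟩
          rw [Sum.inr.injEq]
          exact Subtype.ext (Sym2.eq_of_ne_mem hne h1 h2 (by simp [he₀]) (by simp [he₀]))
        · intro h
          rw [Sum.inr.injEq] at h
          subst h
          simp [he₀]
    rw [this, Set.ncard_singleton]
  by_cases hall : ∀ (v : V) (e : G.edgeSet), v ∈ (e : Sym2 V)
  · -- every vertex in every edge, so the only edge is e₀ and V = {a,b}
    have hedge : ∀ f : G.edgeSet, f = e₀ := by
      intro f
      apply Subtype.ext
      exact Sym2.eq_of_ne_mem hne (hall a f) (hall b f) (by simp [he₀]) (by simp [he₀])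
    have h1 : (G.subdivision.neighborSet (Sum.inl a)).ncard = 1 := by
      have : G.subdivision.neighborSet (Sum.inl a) = {Sum.inr e₀} := by
        ext x
        rcases x with w | f
        · simp only [mem_neighborSet, Set.mem_singleton_iff]
          constructor
          · intro h; exact absurd h (subd_adj_ll G a w)
          · intro h; exact absurd h (by simp)
        · simp only [mem_neighborSet, Set.mem_singleton_iff, subd_adj_lr]
          constructor
          · intro _; rw [Sum.inr.injEq]; exact hedge f
          · intro h; rw [Sum.inr.injEq] at h; subst h; simp [he₀]
      rw [this, Set.ncard_singleton]
    have h2 : (G.subdivision.neighborSet (Sum.inr e₀)).ncard = 2 := by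
      have : G.subdivision.neighborSet (Sum.inr e₀) = {Sum.inl a, Sum.inl b} := by
        ext x
        rcases x with w | f
        · simp only [mem_neighborSet, subd_adj_rl, Set.mem_insert_iff,
            Set.mem_singleton_iff, he₀, Sym2.mem_iff]
          constructor
          · rintro (rfl | rfl) <;> simp
          · rintro (h | h) <;> simp_all
        · simp only [mem_neighborSet, Set.mem_insert_iff, Set.mem_singleton_iff]
          constructor
          · intro h; exact absurd h (subd_adj_rr G e₀ f)
          · rintro (h | h) <;> exact absurd h (by simp)
      rw [this, Set.ncard_pair (by simp [hne])]
    rw [hk (Sum.inl a)] at h1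
    rw [hk (Sum.inr e₀)] at h2
    omega
  · push_neg at hall
    obtain ⟨v, e, hve⟩ := hall
    have h := hm (Sum.inl v) (Sum.inr e) (by simp) (fun h => hve h)
    have hempty : G.subdivision.commonNeighbors (Sum.inl v) (Sum.inr e) = ∅ := by
      ext x
      rcases x with w | f
      · simp only [commonNeighbors, Set.mem_inter_iff, mem_neighborSet,
          Set.mem_empty_iff_false, iff_false, not_and]
        intro h1; exact absurd h1 (subd_adj_ll G v w)
      · simp only [commonNeighbors, Set.mem_inter_iff, mem_neighborSet,
          Set.mem_empty_iff_false, iff_false, not_and]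
        intro _ h2; exact (subd_adj_rr G e f) h2
    rw [hempty, Set.ncard_empty] at h
    omega
end
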